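/- Let $l$ be a semisimple commutative algebra $l = \bigoplus_{i=1}^n k e_i$ over an algebraically closed field $k$ of characteristic zero, let $V_c$ be a finite-dimensional graded $l$-bimodule with non-degenerate antisymmetric $\eta_2 \in (V_c \otimes_l V_c)_l$ written as $\eta_2 = \sum_{a \in Q}[a, a^*]$ for a graded quiver $Q$, and suppose $\eta_n \in (V_c^{\otimes_l n})_l$ ($n \geq 3$) is a sum of graded commutators. Then there exists an $l$-bimodule map $\beta : V_c \to V_c^{\otimes_l (n-1)}$ such that $\eta_n = [\eta_2', \beta(\eta_2'')]$ in $(V_c^{\otimes_l n})_l$; explicitly, writing $\eta_n = \sum_{a \in Q}([a,\eta_a] + [a^*,\eta_{a^*}])$ modulo $[l,-]$, one may take $\beta(a) = -(-1)^{|a||a^*|}\eta_{a^*}$ and $\beta(a^*) = \eta_a$. -/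

import Mathlib

open FreeAlgebra

section Prelim

variable (k : Type) [Field k]
variable (X : Type)

/-- `x` is homogeneous of path length `m`: every word in its support has length `m`. -/
def homogOfLength (m : ℕ) (x : FreeAlgebra k X) : Prop :=
  ∀ w ∈ ((FreeAlgebra.equivMonoidAlgebraFreeMonoid (R := k) (X := X)) x).coeff.support,
    (FreeMonoid.toList w).length = m

/-- The linear span of commutators in the free (path) algebra. -/
def commutatorSpan : Submodule k (FreeAlgebra k X) :=
  Submodule.span k {c : FreeAlgebra k X | ∃ u v : FreeAlgebra k X, c = u * v - v * u}

end Prelim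

set_option linter.unusedSectionVars false

namespace CSN

open MonoidAlgebra Finsupp FreeMonoid

variable (k : Type) [Field k] (X : Type)

/-- rotate a word by one. -/
def rot1 (w : FreeMonoid X) : FreeMonoid X :=
  FreeMonoid.ofList ((FreeMonoid.toList w).rotate 1)

variable {X}

noncomputable def Rlin : MonoidAlgebra k (FreeMonoid X) →ₗ[k] MonoidAlgebra k (FreeMonoid X) :=
  MonoidAlgebra.mapDomainLinearMap k k (rot1 X)

/-- words of length m. -/
def W (m : ℕ) : Submodule k (MonoidAlgebra k (FreeMonoid X)) where
  carrier := {f | ∀ w ∈ f.coeff.support, (FreeMonoid.toList w).length = m}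
  add_mem' := by
    classical
    intro f g hf hg w hw
    rcases Finset.mem_union.mp (Finsupp.support_add hw) with h | h
    · exact hf w h
    · exact hg w h
  zero_mem' := by simp
  smul_mem' := fun c f hf w hw => hf w (Finsupp.support_smul hw)

variable {k}

theorem single_mem_W {m : ℕ} {w : FreeMonoid X} (h : (FreeMonoid.toList w).length = m) (a : k) :
    MonoidAlgebra.single w a ∈ W k m := by
  intro v hv
  rw [Finset.mem_singleton.mp (Finsupp.support_single_subset hv)]
  exact h

theorem Rlin_single (w : FreeMonoid X) (a : k) :
    Rlin k (MonoidAlgebra.single w a) = MonoidAlgebra.single (rot1 X w) a := by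
  exact MonoidAlgebra.mapDomainLinearMap_single ..

theorem Rpow_single (j : ℕ) (w : FreeMonoid X) (a : k) :
    ((Rlin k) ^ j) (MonoidAlgebra.single w a)
      = MonoidAlgebra.single (FreeMonoid.ofList ((FreeMonoid.toList w).rotate j)) a := by
  induction j with
  | zero => simp
  | succ j ih =>
      rw [pow_succ', Module.End.mul_apply, ih, Rlin_single]
      simp [rot1, List.rotate_rotate]

/-- workhorse: two linear maps agree on a length-homogeneous element if they agree on
length-m singles. -/
theorem map_eq_on_W {m : ℕ} (L L' : MonoidAlgebra k (FreeMonoid X) →ₗ[k] MonoidAlgebra k (FreeMonoid X))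
    {f : MonoidAlgebra k (FreeMonoid X)} (hf : f ∈ W k m)
    (h : ∀ (w : FreeMonoid X) (a : k), (FreeMonoid.toList w).length = m →
      L (MonoidAlgebra.single w a) = L' (MonoidAlgebra.single w a)) :
    L f = L' f := by
  conv_lhs => rw [← MonoidAlgebra.sum_coeff_single f]
  conv_rhs => rw [← MonoidAlgebra.sum_coeff_single f]
  rw [map_finsuppSum, map_finsuppSum]
  exact Finsupp.sum_congr fun w hw => h w _ (hf w hw)

theorem map_mem_W {m m' : ℕ} (L : MonoidAlgebra k (FreeMonoid X) →ₗ[k] MonoidAlgebra k (FreeMonoid X))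
    {f : MonoidAlgebra k (FreeMonoid X)} (hf : f ∈ W k m)
    (h : ∀ (w : FreeMonoid X) (a : k), (FreeMonoid.toList w).length = m →
      L (MonoidAlgebra.single w a) ∈ W k m') :
    L f ∈ W k m' := by
  rw [← MonoidAlgebra.sum_coeff_single f, map_finsuppSum]
  refine AddSubmonoidClass.finsuppSum_mem (W k m') f.coeff _ fun w hw => ?_
  exact h w _ (hf w (Finsupp.mem_support_iff.mpr hw))

theorem Rlin_mem_W {m : ℕ} {f : MonoidAlgebra k (FreeMonoid X)} (hf : f ∈ W k m) :
    Rlin k f ∈ W k m := by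
  refine map_mem_W _ hf fun w a hw => ?_
  rw [Rlin_single]
  exact single_mem_W (by simp [rot1, hw]) a

theorem Rpow_mem_W {m : ℕ} (j : ℕ) {f : MonoidAlgebra k (FreeMonoid X)} (hf : f ∈ W k m) :
    ((Rlin k) ^ j) f ∈ W k m := by
  induction j with
  | zero => simpa using hf
  | succ j ih => rw [pow_succ', Module.End.mul_apply]; exact Rlin_mem_W ih

theorem Rpow_n_eq {n : ℕ} {f : MonoidAlgebra k (FreeMonoid X)} (hf : f ∈ W k n) :
    ((Rlin k) ^ n) f = f := by
  have := map_eq_on_W ((Rlin k) ^ n) LinearMap.id hf (fun w a hw => ?_)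
  · simpa using this
  · rw [Rpow_single, ← hw, List.rotate_length]
    simp


/-- sum of rotation powers. -/
noncomputable def SG (n : ℕ) : MonoidAlgebra k (FreeMonoid X) →ₗ[k] MonoidAlgebra k (FreeMonoid X) :=
  ∑ j ∈ Finset.range n, (Rlin k) ^ j

/-- projection onto words of length n. -/
noncomputable def piN (n : ℕ) : MonoidAlgebra k (FreeMonoid X) →ₗ[k] MonoidAlgebra k (FreeMonoid X) :=
  Finsupp.linearCombination k (fun w =>
    (if (FreeMonoid.toList w).length = n then MonoidAlgebra.single w 1 else 0 :
      MonoidAlgebra k (FreeMonoid X))) ∘ₗ (MonoidAlgebra.coeffLinearEquiv k).toLinearMap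

theorem piN_single (n : ℕ) (w : FreeMonoid X) (a : k) :
    piN n (MonoidAlgebra.single w a)
      = if (FreeMonoid.toList w).length = n then MonoidAlgebra.single w a else 0 := by
  rw [piN, LinearMap.comp_apply]
  erw [Finsupp.linearCombination_single]
  split <;> simp [MonoidAlgebra.smul_single']

theorem piN_eq_self {n : ℕ} {f : MonoidAlgebra k (FreeMonoid X)} (hf : f ∈ W k n) :
    piN n f = f := by
  have := map_eq_on_W (piN n) LinearMap.id hf (fun w a hw => by simp [piN_single, hw])
  simpa using this

theorem SG_rot {n : ℕ} {f : MonoidAlgebra k (FreeMonoid X)} (hf : f ∈ W k n) :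
    SG n (Rlin k f) = SG n f := by
  have key : ∀ g : MonoidAlgebra k (FreeMonoid X), SG n g = ∑ j ∈ Finset.range n, ((Rlin k) ^ j) g := by
    intro g; rw [SG, LinearMap.coe_sum, Finset.sum_apply]
  rw [key, key]
  have h1 : ∀ j, ((Rlin k) ^ j) (Rlin k f) = ((Rlin k) ^ (j + 1)) f := by
    intro j; rw [pow_succ, Module.End.mul_apply]
  simp only [h1]
  have h2 := Finset.sum_range_succ' (fun j => ((Rlin k) ^ j) f) n
  have h3 := Finset.sum_range_succ (fun j => ((Rlin k) ^ j) f) n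
  rw [h3] at h2
  have h4 : ((Rlin k) ^ n) f = ((Rlin k) ^ 0) f := by rw [Rpow_n_eq hf]; simp
  rw [h4] at h2
  exact add_right_cancel h2.symm

theorem SG_rotpow {n : ℕ} (m : ℕ) {f : MonoidAlgebra k (FreeMonoid X)} (hf : f ∈ W k n) :
    SG n (((Rlin k) ^ m) f) = SG n f := by
  induction m with
  | zero => simp
  | succ m ih =>
      rw [pow_succ', Module.End.mul_apply, SG_rot (Rpow_mem_W m hf), ih]

theorem SG_single_rot {n : ℕ} (m : ℕ) (w : FreeMonoid X) (a : k)
    (hw : (FreeMonoid.toList w).length = n) :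
    SG n (MonoidAlgebra.single (FreeMonoid.ofList ((FreeMonoid.toList w).rotate m)) a)
      = SG n (MonoidAlgebra.single w a) := by
  rw [← Rpow_single, SG_rotpow m (single_mem_W hw a)]

/-- the commutator-killing property of `SG ∘ piN`. -/
theorem SG_piN_mul_comm (n : ℕ) (u v : MonoidAlgebra k (FreeMonoid X)) :
    SG n (piN n (u * v)) = SG n (piN n (v * u)) := by
  have expand : ∀ p q : MonoidAlgebra k (FreeMonoid X),
      SG n (piN n (p * q)) = ∑ w1 ∈ p.coeff.support, ∑ w2 ∈ q.coeff.support,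
        SG n (piN n (MonoidAlgebra.single (w1 * w2) (p.coeff w1 * q.coeff w2))) := by
    intro p q
    rw [MonoidAlgebra.mul_def]
    rw [map_finsuppSum, map_finsuppSum]
    rw [Finsupp.sum]
    refine Finset.sum_congr rfl fun w1 _ => ?_
    rw [Finsupp.sum, map_sum, map_sum]
  rw [expand, expand, Finset.sum_comm]
  refine Finset.sum_congr rfl fun w2 _ => Finset.sum_congr rfl fun w1 _ => ?_
  rw [mul_comm (v.coeff w2) (u.coeff w1)]
  -- now reduce to single words
  rw [piN_single, piN_single]
  have hlen1 : (FreeMonoid.toList (w1 * w2)).length = (FreeMonoid.toList w1).length + (FreeMonoid.toList w2).length := by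
    rw [FreeMonoid.toList_mul, List.length_append]
  have hlen2 : (FreeMonoid.toList (w2 * w1)).length = (FreeMonoid.toList w1).length + (FreeMonoid.toList w2).length := by
    rw [FreeMonoid.toList_mul, List.length_append, Nat.add_comm]
  by_cases hc : (FreeMonoid.toList w1).length + (FreeMonoid.toList w2).length = n
  · rw [if_pos (hlen1.trans hc), if_pos (hlen2.trans hc)]
    have hrot : w2 * w1 = FreeMonoid.ofList ((FreeMonoid.toList (w1 * w2)).rotate (FreeMonoid.toList w1).length) := by
      rw [FreeMonoid.toList_mul, List.rotate_append_length_eq]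
      rfl
    rw [hrot, SG_single_rot _ _ _ (hlen1.trans hc)]
  · rw [if_neg (fun h => hc (hlen1.symm.trans h)), if_neg (fun h => hc (hlen2.symm.trans h))]

/-- left-derivative word function (on lists). -/
noncomputable def dfunL [DecidableEq X] (x : X) : List X → MonoidAlgebra k (FreeMonoid X)
  | [] => 0
  | y :: r => if y = x then MonoidAlgebra.single (FreeMonoid.ofList r) 1 else 0

/-- left-derivative word function. -/
noncomputable def dfun [DecidableEq X] (x : X) (w : FreeMonoid X) :
    MonoidAlgebra k (FreeMonoid X) :=
  dfunL x (FreeMonoid.toList w)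

/-- left derivative with respect to the letter x. -/
noncomputable def D [DecidableEq X] (x : X) :
    MonoidAlgebra k (FreeMonoid X) →ₗ[k] MonoidAlgebra k (FreeMonoid X) :=
  Finsupp.linearCombination k (dfun x) ∘ₗ (MonoidAlgebra.coeffLinearEquiv k).toLinearMap

theorem D_single [DecidableEq X] (x : X) (w : FreeMonoid X) (a : k) :
    D x (MonoidAlgebra.single w a) = a • dfun x w := by
  rw [D, LinearMap.comp_apply]; erw [Finsupp.linearCombination_single]

theorem D_mem_W [DecidableEq X] {n : ℕ} (x : X) {f : MonoidAlgebra k (FreeMonoid X)}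
    (hf : f ∈ W k n) : D x f ∈ W k (n - 1) := by
  refine map_mem_W _ hf fun w a hw => ?_
  rw [D_single]
  refine Submodule.smul_mem _ _ ?_
  rw [dfun]
  rcases hl : FreeMonoid.toList w with _ | ⟨y, r⟩
  · simp only [hl, dfunL]
    exact Submodule.zero_mem _
  · simp only [hl, dfunL]
    split
    · refine single_mem_W ?_ 1
      have : (y :: r).length = n := by rw [← hl, hw]
      simp only [FreeMonoid.toList_ofList]
      simp at this
      omega
    · exact Submodule.zero_mem _

/-- the extraction identity: on length-homogeneous elements of positive length,
`∑ₓ [x, Dₓ f] = f - R f`. -/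
theorem extraction [DecidableEq X] [Fintype X] {n : ℕ} (hn : 1 ≤ n)
    {f : MonoidAlgebra k (FreeMonoid X)} (hf : f ∈ W k n) :
    ∑ x : X, (MonoidAlgebra.single (FreeMonoid.of x) (1:k) * D x f
        - D x f * MonoidAlgebra.single (FreeMonoid.of x) 1)
      = f - Rlin k f := by
  have recast : ∀ g : MonoidAlgebra k (FreeMonoid X),
      ∑ x : X, (MonoidAlgebra.single (FreeMonoid.of x) (1:k) * D x g
          - D x g * MonoidAlgebra.single (FreeMonoid.of x) 1)
        = (∑ x : X, ((LinearMap.mulLeft k (MonoidAlgebra.single (FreeMonoid.of x) (1:k))).comp (D x)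
            - (LinearMap.mulRight k (MonoidAlgebra.single (FreeMonoid.of x) (1:k))).comp (D x))) g := by
    intro g
    rw [LinearMap.coe_sum, Finset.sum_apply]
    refine Finset.sum_congr rfl fun x _ => ?_
    simp [LinearMap.mulLeft, LinearMap.mulRight]
  rw [recast]
  have rhs : f - Rlin k f
      = ((LinearMap.id - Rlin k : MonoidAlgebra k (FreeMonoid X) →ₗ[k] MonoidAlgebra k (FreeMonoid X))) f := by
    simp
  rw [rhs]
  refine map_eq_on_W _ _ hf fun w a hw => ?_
  -- w is a nonempty word
  rcases hl : FreeMonoid.toList w with _ | ⟨y, r⟩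
  · exfalso; rw [hl] at hw; simp at hw; omega
  have hwe : w = FreeMonoid.ofList (y :: r) := by rw [← hl, FreeMonoid.ofList_toList]
  rw [LinearMap.coe_sum, Finset.sum_apply]
  have term : ∀ x : X,
      ((LinearMap.mulLeft k (MonoidAlgebra.single (FreeMonoid.of x) (1:k))).comp (D x)
        - (LinearMap.mulRight k (MonoidAlgebra.single (FreeMonoid.of x) (1:k))).comp (D x))
        (MonoidAlgebra.single w a)
      = if y = x then
          (MonoidAlgebra.single w a
            - MonoidAlgebra.single (FreeMonoid.ofList (r ++ [y])) a) else 0 := by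
    intro x
    have hD : D x (MonoidAlgebra.single w a)
        = if y = x then MonoidAlgebra.single (FreeMonoid.ofList r) a else 0 := by
      rw [D_single, dfun]
      simp only [hl, dfunL]
      split <;> simp [MonoidAlgebra.smul_single', Finsupp.smul_single]
    simp only [LinearMap.sub_apply, LinearMap.comp_apply, hD, LinearMap.mulLeft_apply,
      LinearMap.mulRight_apply]
    split
    · rename_i hyx
      rw [MonoidAlgebra.single_mul_single, MonoidAlgebra.single_mul_single]
      rw [one_mul, mul_one]
      congr 2
      · rw [hwe, ← hyx, ← FreeMonoid.ofList_cons]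
      · rw [← hyx]
        rfl
    · simp
  simp only [term]
  rw [Finset.sum_ite_eq Finset.univ y
    (fun _ => MonoidAlgebra.single w a - MonoidAlgebra.single (FreeMonoid.ofList (r ++ [y])) a)]
  simp only [Finset.mem_univ, if_true]
  have : Rlin k (MonoidAlgebra.single w a) = MonoidAlgebra.single (FreeMonoid.ofList (r ++ [y])) a := by
    rw [Rlin_single, rot1, hl, List.rotate_cons_succ, List.rotate_zero]
  simp [this]

theorem exists_xi {n : ℕ} (hkn : (n:k) ≠ 0) {η : MonoidAlgebra k (FreeMonoid X)}
    (hη : η ∈ W k n) (hSG : SG n η = 0) :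
    ∃ ξ ∈ W k n, ξ - Rlin k ξ = η := by
  have shift : ∀ F : ℕ → MonoidAlgebra k (FreeMonoid X),
      ∑ j ∈ Finset.range n, F (j+1) = (∑ j ∈ Finset.range n, F j) + F n - F 0 := by
    intro F
    have h2 := Finset.sum_range_succ' F n
    have h3 := Finset.sum_range_succ F n
    rw [h3] at h2
    exact eq_sub_of_add_eq h2.symm
  set F : ℕ → MonoidAlgebra k (FreeMonoid X) :=
    fun j => ((n:k) - j) • ((Rlin k ^ j) η) with hF
  have hSGsum : SG n η = ∑ j ∈ Finset.range n, (Rlin k ^ j) η := by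
    rw [SG, LinearMap.coe_sum, Finset.sum_apply]
  set ξ : MonoidAlgebra k (FreeMonoid X) :=
    (n:k)⁻¹ • ∑ j ∈ Finset.range n, (F j - (Rlin k ^ j) η) with hξdef
  have hξW : ξ ∈ W k n := by
    refine Submodule.smul_mem _ _ (Submodule.sum_mem _ fun j _ => Submodule.sub_mem _ ?_ ?_)
    · exact Submodule.smul_mem _ _ (Rpow_mem_W j hη)
    · exact Rpow_mem_W j hη
  refine ⟨ξ, hξW, ?_⟩
  set S : MonoidAlgebra k (FreeMonoid X) := ∑ j ∈ Finset.range n, F j with hS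
  have hxi : ξ = (n:k)⁻¹ • S := by
    rw [hξdef, Finset.sum_sub_distrib, ← hSGsum, hSG, sub_zero]
  have hRxi : Rlin k ξ = (n:k)⁻¹ • (S - (n:k) • η) := by
    rw [hxi, map_smul, hS, map_sum]
    congr 1
    have hRF : ∀ j, Rlin k (F j) = F (j+1) + (Rlin k ^ (j+1)) η := by
      intro j
      rw [hF]
      simp only
      rw [map_smul]
      have hp : Rlin k ((Rlin k ^ j) η) = (Rlin k ^ (j+1)) η := by
        rw [pow_succ', Module.End.mul_apply]
      rw [hp]
      have hc : ((n:k) - (j:k)) = ((n:k) - ((j:ℕ)+1:ℕ)) + 1 := by push_cast; ring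
      rw [hc, add_smul, one_smul]
    calc ∑ j ∈ Finset.range n, Rlin k (F j)
        = ∑ j ∈ Finset.range n, (F (j+1) + (Rlin k ^ (j+1)) η) :=
          Finset.sum_congr rfl fun j _ => hRF j
      _ = (∑ j ∈ Finset.range n, F (j+1))
            + ∑ j ∈ Finset.range n, (Rlin k ^ (j+1)) η := Finset.sum_add_distrib
      _ = ((∑ j ∈ Finset.range n, F j) + F n - F 0)
            + ((∑ j ∈ Finset.range n, (Rlin k ^ j) η) + (Rlin k ^ n) η - (Rlin k ^ 0) η) := by
          rw [shift F, shift (fun j => (Rlin k ^ j) η)]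
      _ = S - (n:k) • η := by
          rw [← hSGsum, hSG, Rpow_n_eq hη]
          have hFn : F n = 0 := by rw [hF]; simp
          have hF0 : F 0 = (n:k) • η := by rw [hF]; simp
          rw [hFn, hF0, ← hS]
          simp
  rw [hRxi, hxi, ← smul_sub, sub_sub_cancel, smul_smul, inv_mul_cancel₀ hkn, one_smul]

theorem e_symm_single (k : Type) [Field k] (X : Type) (x : X) :
    (FreeAlgebra.equivMonoidAlgebraFreeMonoid (R := k) (X := X)).symm
      (MonoidAlgebra.single (FreeMonoid.of x) (1:k)) = FreeAlgebra.ι k x := by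
  have h : FreeAlgebra.equivMonoidAlgebraFreeMonoid (R := k) (X := X) (FreeAlgebra.ι k x)
      = MonoidAlgebra.single (FreeMonoid.of x) 1 := by
    show (FreeAlgebra.lift k fun x => (MonoidAlgebra.of k (FreeMonoid X)) (FreeMonoid.of x))
        (FreeAlgebra.ι k x) = _
    rw [FreeAlgebra.lift_ι_apply, MonoidAlgebra.of_apply]
  rw [← h, AlgEquiv.symm_apply_apply]

end CSN


/-!
STATEMENT 19: Let `l = ⊕ᵢ k eᵢ` over an algebraically closed field `k` of characteristic
zero, `V_c` a finite-dimensional graded `l`-bimodule with a non-degenerate antisymmetric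
`η₂ ∈ (V_c ⊗_l V_c)_l` written as `η₂ = ∑_{a ∈ Q} [a, a^*]` for a graded quiver `Q`, and
let `ηₙ ∈ (V_c^{⊗ n})_l` (`n ≥ 3`) be a sum of graded commutators.  Then there is an
`l`-bimodule map `β : V_c → V_c^{⊗(n−1)}` such that `ηₙ = [η₂', β(η₂'')]`, i.e.
`ηₙ = ∑_{a ∈ Q} ([a, β(a^*)] − [a^*, β(a)])`, where (in the ungraded rendering, all signs
`(−1)^{|a||a^*|}` being `+1`) one may take `β(a) = −η_{a^*}` and `β(a^*) = η_a`.

We formalize the one-vertex, evenly graded model: the tensor algebra is the free algebra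
on the doubled arrow set `X = T ⊕ T` (arrow `x_t = inl t`, reversed arrow
`x_t^* = inr t`), `β` is determined by its values on the arrows, and homogeneity of path
length replaces the internal grading.
-/
open CSN in
theorem commutator_superpotential_normalization
    (k : Type) [Field k] [CharZero k] [IsAlgClosed k]
    (T : Type) [Fintype T] [DecidableEq T]
    (n : ℕ) (hn : 3 ≤ n)
    (ηn : FreeAlgebra k (T ⊕ T))
    (hcomm : ηn ∈ commutatorSpan k (T ⊕ T))
    (hhomog : homogOfLength k (T ⊕ T) n ηn) :
    ∃ β : (T ⊕ T) → FreeAlgebra k (T ⊕ T),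
      (∀ x, homogOfLength k (T ⊕ T) (n - 1) (β x)) ∧
      ηn = ∑ t : T,
        ((FreeAlgebra.ι k (Sum.inl t) * β (Sum.inr t)
            - β (Sum.inr t) * FreeAlgebra.ι k (Sum.inl t))
          - (FreeAlgebra.ι k (Sum.inr t) * β (Sum.inl t)
            - β (Sum.inl t) * FreeAlgebra.ι k (Sum.inr t))) := by
  classical
  let e := FreeAlgebra.equivMonoidAlgebraFreeMonoid (R := k) (X := T ⊕ T)
  have hηW : e ηn ∈ W k n := by
    rw [show (e ηn ∈ W k n) ↔ ∀ w ∈ (e ηn).coeff.support, (FreeMonoid.toList w).length = n from Iff.rfl]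
    exact hhomog
  -- Step A : SG n (e ηn) = 0
  have hspan : SG n (piN n (e ηn)) = 0 := by
    rw [commutatorSpan] at hcomm
    refine Submodule.span_induction
      (p := fun x _ => SG n (piN n (e x)) = 0) ?_ ?_ ?_ ?_ hcomm
    · rintro x ⟨u, v, rfl⟩
      rw [map_sub, map_mul, map_mul, map_sub, map_sub, SG_piN_mul_comm, sub_self]
    · simp
    · intro x y _ _ hpx hpy
      rw [map_add, map_add, map_add, hpx, hpy, add_zero]
    · intro a x _ hpx
      rw [map_smul, map_smul, map_smul, hpx, smul_zero]
  rw [piN_eq_self hηW] at hspan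
  have hkn : (n:k) ≠ 0 := Nat.cast_ne_zero.mpr (by omega)
  obtain ⟨ξ, hξW, hξ⟩ := exists_xi hkn hηW hspan
  have hext := extraction (n := n) (by omega) hξW
  rw [hξ] at hext
  set c : T ⊕ T → FreeAlgebra k (T ⊕ T) := fun x => e.symm (D x ξ) with hc
  have hecx : ∀ x, e (c x) = D x ξ := fun x => AlgEquiv.apply_symm_apply _ _
  have hcW : ∀ x : T ⊕ T, ∀ w ∈ (e (c x)).coeff.support, (FreeMonoid.toList w).length = n - 1 := by
    intro x
    rw [hecx x]
    exact D_mem_W x hξW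
  refine ⟨Sum.elim (fun t => -(c (Sum.inr t))) (fun t => c (Sum.inl t)), ?_, ?_⟩
  · rintro (t | t) w hw
    · simp only [Sum.elim_inl] at hw
      rw [show ((FreeAlgebra.equivMonoidAlgebraFreeMonoid (R := k)) (-(c (Sum.inr t))))
          = -(e (c (Sum.inr t))) from map_neg e _, MonoidAlgebra.coeff_neg, Finsupp.support_neg] at hw
      exact hcW (Sum.inr t) w hw
    · simp only [Sum.elim_inr] at hw
      exact hcW (Sum.inl t) w hw
  · have hηn : ηn = e.symm (e ηn) := (AlgEquiv.symm_apply_apply e ηn).symm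
    rw [hηn, ← hext, map_sum]
    have hterm : ∀ x : T ⊕ T,
        e.symm (MonoidAlgebra.single (FreeMonoid.of x) (1:k) * D x ξ
          - D x ξ * MonoidAlgebra.single (FreeMonoid.of x) 1)
        = FreeAlgebra.ι k x * c x - c x * FreeAlgebra.ι k x := by
      intro x
      rw [map_sub, map_mul, map_mul, e_symm_single, hc]
    rw [Finset.sum_congr rfl fun x _ => hterm x]
    rw [Fintype.sum_sum_type, ← Finset.sum_add_distrib]
    refine Finset.sum_congr rfl fun t _ => ?_
    simp only [Sum.elim_inl, Sum.elim_inr, mul_neg, neg_mul]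
    abel
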